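/- Let R be a Bézout domain. Then every finitely generated projective R-module is free, the Picard group of R is trivial, and consequently for the standard Borel subgroup B of upper triangular matrices in GL_m, the natural map GL_m(R)/B(R) → (GL_m/B)(R) (to R-points of the flag variety) is bijective. -/

import Mathlib

open Matrix
open scoped MatrixGroups

/-- The flag of column spans of an invertible matrix: `colSpan g i` is the span of the
first `i` columns of `g`. -/
def colSpan (R : Type) [CommRing R] (m : ℕ) (g : GL (Fin m) R) (i : Fin (m + 1)) :
    Submodule R (Fin m → R) :=
  Submodule.span R
    ((fun j k => ((g : Matrix (Fin m) (Fin m) R) k j)) '' {j : Fin m | (j : ℕ) < (i : ℕ)})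

section Part1
variable {R : Type} [CommRing R] [IsDomain R] [IsBezout R]

theorem free_of_fg_inj : ∀ (n : ℕ) (M : Type) [AddCommGroup M] [Module R M],
    Module.Finite R M → ∀ (f : M →ₗ[R] (Fin n → R)), Function.Injective f →
    Module.Free R M := by
  intro n
  induction n with
  | zero =>
    intro M _ _ _ f hf
    have : Subsingleton M := ⟨fun a b => hf (Subsingleton.elim _ _)⟩
    exact Module.Free.of_subsingleton R M
  | succ n ih =>
    intro M _ _ hfin f hf
    classical
    set g : M →ₗ[R] R := (LinearMap.proj (Fin.last n)).comp f with hg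
    have hrfg : (LinearMap.range g).FG := by
      have : Module.Finite R (LinearMap.range g) := Module.Finite.range g
      exact (Module.Finite.iff_fg).mp this
    obtain ⟨a, ha⟩ := (IsBezout.isPrincipal_of_FG _ hrfg).principal
    by_cases h0 : a = 0
    · -- g = 0
      have hgz : ∀ x, g x = 0 := by
        intro x
        have : g x ∈ LinearMap.range g := LinearMap.mem_range_self g x
        rw [ha, h0] at this
        simpa [Ideal.span_singleton_eq_bot.mpr rfl] using this
      set f' : M →ₗ[R] (Fin n → R) := (LinearMap.funLeft R R Fin.castSucc).comp f with hf'
      apply ih M hfin f'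
      intro x y hxy
      apply hf
      funext i
      refine Fin.lastCases ?_ ?_ i
      · have hx := hgz x; have hy := hgz y
        simp only [hg, LinearMap.comp_apply, LinearMap.proj_apply] at hx hy
        rw [hx, hy]
      · intro j
        have := congrFun hxy j
        simpa [hf', LinearMap.funLeft] using this
    · -- split off a free rank 1 piece
      have hinj : Function.Injective (LinearMap.toSpanSingleton R R a) := by
        intro x y hxy
        simp only [LinearMap.toSpanSingleton_apply, smul_eq_mul] at hxy
        exact mul_right_cancel₀ h0 hxy
      have hrange : LinearMap.range (LinearMap.toSpanSingleton R R a) = LinearMap.range g := by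
        rw [LinearMap.span_singleton_eq_range] at ha
        rw [← ha]
      have : Module.Free R (LinearMap.range g) := by
        refine Module.Free.of_equiv (R := R) (M := R) (?_ : R ≃ₗ[R] LinearMap.range g)
        exact (LinearEquiv.ofInjective _ hinj).trans (LinearEquiv.ofEq _ _ hrange)
      have hproj : Module.Projective R (LinearMap.range g) := Module.Projective.of_free
      -- exact sequence ker g → M → range g
      have hexact : Function.Exact (LinearMap.ker g).subtype g.rangeRestrict := by
        intro x
        constructor
        · intro hx
          have : g x = 0 := by
            have := congrArg Subtype.val hx
            simpa using this
          exact ⟨⟨x, this⟩, rfl⟩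
        · rintro ⟨⟨y, hy⟩, rfl⟩
          ext
          simpa using hy
      obtain ⟨l, hl⟩ := Module.projective_lifting_property g.rangeRestrict LinearMap.id
        g.surjective_rangeRestrict
      obtain ⟨e, -⟩ := hexact.splitSurjectiveEquiv (Submodule.injective_subtype _) ⟨l, hl⟩
      -- ker g is finite and injects into Fin n → R
      have hkerfin : Module.Finite R (LinearMap.ker g) :=
        Module.Finite.of_surjective ((LinearMap.fst R _ _) ∘ₗ (e : M ≃ₗ[R] _).toLinearMap)
          ((Prod.fst_surjective).comp e.surjective)
      set f' : (LinearMap.ker g) →ₗ[R] (Fin n → R) :=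
        ((LinearMap.funLeft R R Fin.castSucc).comp f).comp (LinearMap.ker g).subtype with hf'
      have hf'inj : Function.Injective f' := by
        intro x y hxy
        ext1
        apply hf
        funext i
        refine Fin.lastCases ?_ ?_ i
        · have hx : g x.1 = 0 := x.2
          have hy : g y.1 = 0 := y.2
          simp only [hg, LinearMap.comp_apply, LinearMap.proj_apply] at hx hy
          rw [hx, hy]
        · intro j
          have := congrFun hxy j
          simpa [hf', LinearMap.funLeft] using this
      have hkerfree : Module.Free R (LinearMap.ker g) := ih _ hkerfin f' hf'inj
      exact Module.Free.of_equiv e.symm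

theorem free_of_fg_proj (M : Type) [AddCommGroup M] [Module R M]
    (hfin : Module.Finite R M) (hproj : Module.Projective R M) : Module.Free R M := by
  obtain ⟨n, f, hfsurj⟩ := Module.Finite.exists_fin' R M
  obtain ⟨s, hs⟩ := Module.projective_lifting_property f LinearMap.id hfsurj
  have hsinj : Function.Injective s := by
    intro x y hxy
    have := congrArg f hxy
    rw [← LinearMap.comp_apply, ← LinearMap.comp_apply, hs] at this
    simpa using this
  exact free_of_fg_inj n M hfin s hsinj

open nonZeroDivisors in
theorem classGroup_subsingleton : Subsingleton (ClassGroup R) := by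
  refine ⟨fun x y => ?_⟩
  have key : ∀ z : ClassGroup R, z = 1 := by
    refine ClassGroup.induction (R := R) (FractionRing R) (fun I => ?_)
    rw [ClassGroup.mk_eq_one_iff]
    -- I is a unit, hence fg, hence num is fg, hence principal
    set K := FractionRing R
    have hfg : Submodule.FG (I.1 : Submodule R K) := FractionalIdeal.fg_of_isUnit I.1 I.isUnit
    have hdnz : ((I.1).den : R) ≠ 0 := nonZeroDivisors.coe_ne_zero _
    have hIfin : Module.Finite R (I.1 : Submodule R K) := Module.Finite.iff_fg.mpr hfg
    have hnumfin : Module.Finite R (I.1).num :=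
      Module.Finite.equiv (FractionalIdeal.equivNum hdnz)
    have hnumfg : ((I.1).num : Submodule R R).FG := Module.Finite.iff_fg.mp hnumfin
    obtain ⟨b, hb⟩ := (IsBezout.isPrincipal_of_FG _ hnumfg).principal
    rw [FractionalIdeal.isPrincipal_iff]
    have hd := FractionalIdeal.den_mul_self_eq_num' R⁰ K I.1
    have hne : algebraMap R K ((I.1).den : R) ≠ 0 := fun h => hdnz (IsFractionRing.injective R K (by simpa using h))
    refine ⟨(algebraMap R K ((I.1).den : R))⁻¹ * algebraMap R K b, ?_⟩
    have hnum : (↑(I.1).num : FractionalIdeal R⁰ K) =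
        FractionalIdeal.spanSingleton R⁰ (algebraMap R K b) := by
      rw [hb, Ideal.submodule_span_eq, FractionalIdeal.coeIdeal_span_singleton]
    calc I.1 = FractionalIdeal.spanSingleton R⁰ ((algebraMap R K ((I.1).den : R))⁻¹) *
        (FractionalIdeal.spanSingleton R⁰ (algebraMap R K ((I.1).den : R)) * I.1) := by
          rw [← mul_assoc, FractionalIdeal.spanSingleton_mul_spanSingleton,
            inv_mul_cancel₀ hne, FractionalIdeal.spanSingleton_one, one_mul]
      _ = FractionalIdeal.spanSingleton R⁰ ((algebraMap R K ((I.1).den : R))⁻¹ * algebraMap R K b) := by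
          rw [hd, hnum, FractionalIdeal.spanSingleton_mul_spanSingleton]
  rw [key x, key y]

end Part1

section Part4
variable {R : Type} [CommRing R] {m : ℕ}

def col' (g : Matrix (Fin m) (Fin m) R) (j : Fin m) : Fin m → R := fun k => g k j

lemma colSpan_eq (g : GL (Fin m) R) (i : Fin (m + 1)) :
    colSpan R m g i = Submodule.span R (col' (g : Matrix (Fin m) (Fin m) R) ''
      {j : Fin m | (j : ℕ) < (i : ℕ)}) := rfl

lemma col'_mul (g h : Matrix (Fin m) (Fin m) R) (j : Fin m) :
    col' (g * h) j = ∑ k, h k j • col' g k := by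
  funext i
  simp only [col', Matrix.mul_apply, Finset.sum_apply, Pi.smul_apply, smul_eq_mul]
  exact Finset.sum_congr rfl fun k _ => mul_comm _ _

lemma isUnit_toLin (g : GL (Fin m) R) :
    IsUnit (Matrix.toLin' (g : Matrix (Fin m) (Fin m) R)) := by
  have : IsUnit ((Matrix.toLinAlgEquiv' : Matrix (Fin m) (Fin m) R ≃ₐ[R] _)
      (g : Matrix (Fin m) (Fin m) R)) := g.isUnit.map _
  have he : (Matrix.toLinAlgEquiv' : Matrix (Fin m) (Fin m) R ≃ₐ[R] _)
      (g : Matrix (Fin m) (Fin m) R) = Matrix.toLin' (g : Matrix (Fin m) (Fin m) R) := by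
    apply LinearMap.ext
    intro v
    rw [Matrix.toLinAlgEquiv'_apply, Matrix.toLin'_apply]
  rwa [he] at this

noncomputable def colBasis (g : GL (Fin m) R) : Module.Basis (Fin m) R (Fin m → R) :=
  Module.Basis.map (Pi.basisFun R (Fin m)) (LinearEquiv.ofBijective
    (Matrix.toLin' (g : Matrix (Fin m) (Fin m) R))
    ((Module.End.isUnit_iff _).mp (isUnit_toLin g)))

lemma colBasis_apply (g : GL (Fin m) R) (j : Fin m) :
    colBasis g j = col' (g : Matrix (Fin m) (Fin m) R) j := by
  funext k
  simp [colBasis, col', Matrix.toLin'_apply, Matrix.mulVec_single]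

/-- column of product as sum over basis -/
lemma col'_eq_sum (g g' : GL (Fin m) R) (j : Fin m) :
    col' (g' : Matrix (Fin m) (Fin m) R) j =
      ∑ k, ((g⁻¹ * g' : GL (Fin m) R) : Matrix (Fin m) (Fin m) R) k j • colBasis g k := by
  have hg' : (g' : Matrix (Fin m) (Fin m) R) =
      (g : Matrix (Fin m) (Fin m) R) * ((g⁻¹ * g' : GL (Fin m) R) : Matrix (Fin m) (Fin m) R) := by
    rw [← Units.val_mul, ← mul_assoc, mul_inv_cancel, one_mul]
  conv_lhs => rw [hg', col'_mul]
  simp_rw [colBasis_apply]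

lemma repr_col (g g' : GL (Fin m) R) (j k : Fin m) :
    (colBasis g).repr (col' (g' : Matrix (Fin m) (Fin m) R) j) k =
      ((g⁻¹ * g' : GL (Fin m) R) : Matrix (Fin m) (Fin m) R) k j := by
  rw [col'_eq_sum g g' j]
  exact congrFun ((colBasis g).repr_sum_self _) k

lemma colSpan_le_of_bt (g g' : GL (Fin m) R)
    (h : Matrix.BlockTriangular ((g⁻¹ * g' : GL (Fin m) R) : Matrix (Fin m) (Fin m) R) id)
    (i : Fin (m + 1)) : colSpan R m g' i ≤ colSpan R m g i := by
  rw [colSpan_eq, colSpan_eq, Submodule.span_le]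
  rintro _ ⟨j, hj, rfl⟩
  rw [col'_eq_sum g g' j]
  apply Submodule.sum_mem
  intro k _
  by_cases hk : ((g⁻¹ * g' : GL (Fin m) R) : Matrix (Fin m) (Fin m) R) k j = 0
  · rw [hk, zero_smul]; exact Submodule.zero_mem _
  · apply Submodule.smul_mem
    apply Submodule.subset_span
    refine ⟨k, ?_, (colBasis_apply g k).symm ▸ rfl⟩
    · have hkj : ¬ (j < k) := fun hlt => hk (h hlt)
      have : (k : ℕ) ≤ (j : ℕ) := Nat.le_of_not_lt (fun hh => hkj (Fin.lt_def.mpr hh))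
      exact lt_of_le_of_lt this hj

lemma image_col'_eq (g : GL (Fin m) R) (s : Set (Fin m)) :
    col' (g : Matrix (Fin m) (Fin m) R) '' s = (colBasis g) '' s := by
  apply Set.image_congr
  intro j _
  exact (colBasis_apply g j).symm

theorem colSpan_eq_iff (g g' : GL (Fin m) R) :
    colSpan R m g = colSpan R m g' ↔
      Matrix.BlockTriangular ((g⁻¹ * g' : GL (Fin m) R) : Matrix (Fin m) (Fin m) R) id := by
  constructor
  · intro hcs i j hij
    have hj1 : (j : ℕ) < ((j.succ : Fin (m + 1)) : ℕ) := by simp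
    have hmem : col' (g' : Matrix (Fin m) (Fin m) R) j ∈ colSpan R m g' j.succ :=
      Submodule.subset_span ⟨j, hj1, rfl⟩
    rw [← hcs, colSpan_eq, image_col'_eq] at hmem
    have hsupp := (Module.Basis.mem_span_image (colBasis g)).mp hmem
    have hins : i ∉ ((colBasis g).repr (col' (g' : Matrix (Fin m) (Fin m) R) j)).support := by
      intro hmem'
      have : (i : ℕ) < ((j.succ : Fin (m + 1)) : ℕ) := hsupp hmem'
      simp only [Fin.val_succ] at this
      exact absurd (Nat.lt_of_lt_of_le (Fin.lt_def.mp hij) (Nat.le_of_lt_succ this))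
        (lt_irrefl _)
    have := Finsupp.notMem_support_iff.mp hins
    rwa [repr_col] at this
  · intro hbt
    have hinv : Matrix.BlockTriangular
        ((g'⁻¹ * g : GL (Fin m) R) : Matrix (Fin m) (Fin m) R) id := by
      have h1 : (g'⁻¹ * g : GL (Fin m) R) = (g⁻¹ * g')⁻¹ := by
        rw [_root_.mul_inv_rev, inv_inv]
      rw [h1, Matrix.coe_units_inv]
      letI := (g⁻¹ * g' : GL (Fin m) R).invertible
      exact Matrix.blockTriangular_inv_of_blockTriangular hbt
    funext i
    exact le_antisymm (colSpan_le_of_bt g' g hinv i) (colSpan_le_of_bt g g' hbt i)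

end Part4

section Part3
open Module
variable {R : Type} [CommRing R] [IsDomain R] [IsBezout R] {m : ℕ}

section Summand

lemma isCompl_fin_free {p N : Submodule R (Fin m → R)} (h : IsCompl p N) :
    Module.Finite R p ∧ Module.Free R p := by
  have hsurj : Function.Surjective (Submodule.linearProjOfIsCompl p N h) := fun x =>
    ⟨(x : Fin m → R), Submodule.linearProjOfIsCompl_apply_left h x⟩
  have hfin : Module.Finite R p := Module.Finite.of_surjective _ hsurj
  have hproj : Module.Projective R p := Module.Projective.of_split p.subtype
    (Submodule.linearProjOfIsCompl p N h) (Submodule.linearProjOfIsCompl_comp_subtype h)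
  exact ⟨hfin, free_of_fg_proj _ hfin hproj⟩

lemma isCompl_comap {A B S : Submodule R (Fin m → R)} (hA : A ≤ S) (hB : B ≤ S)
    (hsup : A ⊔ B = S) (hinf : A ⊓ B = ⊥) :
    IsCompl (A.comap S.subtype) (B.comap S.subtype) := by
  constructor
  · rw [disjoint_iff, eq_bot_iff]
    rintro x ⟨hxA, hxB⟩
    have h : (x : Fin m → R) ∈ A ⊓ B := ⟨hxA, hxB⟩
    rw [hinf] at h
    exact (Submodule.mem_bot R).mpr (Subtype.ext ((Submodule.mem_bot R).mp h))
  · rw [codisjoint_iff, eq_top_iff]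
    rintro ⟨x, hxS⟩ -
    have : x ∈ A ⊔ B := by rw [hsup]; exact hxS
    obtain ⟨a, ha, b, hb, hab⟩ := Submodule.mem_sup.mp this
    refine Submodule.mem_sup.mpr ⟨⟨a, hA ha⟩, ha, ⟨b, hB hb⟩, hb, ?_⟩
    exact Subtype.ext (by simpa using hab)

lemma span_singleton_of_finrank_one (p : Submodule R (Fin m → R)) (hf : Module.Finite R p)
    (hfree : Module.Free R p) (h1 : Module.finrank R p = 1) :
    ∃ v : Fin m → R, p = Submodule.span R {v} := by
  let b := Module.Free.chooseBasis R p
  have hcard : Fintype.card (Module.Free.ChooseBasisIndex R p) = 1 := by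
    rw [← Module.finrank_eq_card_chooseBasisIndex]; exact h1
  obtain ⟨i₀, hi₀⟩ := Fintype.card_eq_one_iff.mp hcard
  refine ⟨(b i₀ : Fin m → R), ?_⟩
  have hrange : Set.range ⇑b = {b i₀} := by
    ext x
    constructor
    · rintro ⟨i, rfl⟩; rw [hi₀ i]; rfl
    · rintro rfl; exact ⟨i₀, rfl⟩
  conv_lhs => rw [← Submodule.map_subtype_top p, ← b.span_eq]
  rw [Submodule.map_span, hrange, Set.image_singleton]
  rfl

end Summand

set_option synthInstance.maxHeartbeats 800000 in
set_option maxHeartbeats 1600000 in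
theorem flag_surj (F : Fin (m + 1) → Submodule R (Fin m → R))
    (hmono : Monotone F) (h0 : F 0 = ⊥) (htop : F (Fin.last m) = ⊤)
    (hcompl : ∀ i, ∃ N, IsCompl (F i) N)
    (hrank : ∀ i : Fin (m + 1), Module.finrank R (F i) = (i : ℕ)) :
    ∃ g : GL (Fin m) R, (fun i : Fin (m+1) => Submodule.span R
      ((fun j k => ((g : Matrix (Fin m) (Fin m) R) k j)) '' {j : Fin m | (j : ℕ) < (i : ℕ)})) = F := by
  classical
  choose N hN using hcompl
  have hle : ∀ i : Fin m, F i.castSucc ≤ F i.succ := fun i => hmono (Fin.castSucc_le_succ i)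
  set Q : Fin m → Submodule R (Fin m → R) := fun i => F i.succ ⊓ N i.castSucc with hQdef
  have hQle : ∀ i, Q i ≤ F i.succ := fun i => inf_le_left
  have hQsup : ∀ i, F i.castSucc ⊔ Q i = F i.succ := by
    intro i
    rw [sup_comm, hQdef]
    rw [inf_sup_assoc_of_le _ (hle i), sup_comm (N i.castSucc) (F i.castSucc),
      codisjoint_iff.mp (hN i.castSucc).codisjoint, inf_top_eq]
  have hQinf : ∀ i, F i.castSucc ⊓ Q i = ⊥ := by
    intro i
    refine le_bot_iff.mp ?_
    calc F i.castSucc ⊓ Q i ≤ F i.castSucc ⊓ N i.castSucc :=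
          inf_le_inf_left _ inf_le_right
      _ = ⊥ := disjoint_iff.mp (hN i.castSucc).disjoint
  have hQcompl : ∀ i, IsCompl (Q i) (F i.castSucc ⊔ N i.succ) := by
    intro i
    constructor
    · rw [disjoint_iff]
      refine le_bot_iff.mp ?_
      have h1 : F i.succ ⊓ (F i.castSucc ⊔ N i.succ) = F i.castSucc := by
        rw [sup_comm (F i.castSucc) (N i.succ), ← inf_sup_assoc_of_le _ (hle i),
          disjoint_iff.mp (hN i.succ).disjoint, bot_sup_eq]
      calc Q i ⊓ (F i.castSucc ⊔ N i.succ)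
          ≤ (F i.succ ⊓ (F i.castSucc ⊔ N i.succ)) ⊓ N i.castSucc := by
            rw [hQdef]
            refine le_inf (le_inf (le_trans inf_le_left inf_le_left) inf_le_right)
              (le_trans inf_le_left inf_le_right)
        _ = F i.castSucc ⊓ N i.castSucc := by rw [h1]
        _ = ⊥ := disjoint_iff.mp (hN i.castSucc).disjoint
    · rw [codisjoint_iff, ← sup_assoc, sup_comm (Q i) (F i.castSucc), hQsup]
      exact codisjoint_iff.mp (hN i.succ).codisjoint
  -- finiteness and freeness
  have hFff : ∀ i : Fin (m+1), Module.Finite R (F i) ∧ Module.Free R (F i) :=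
    fun i => isCompl_fin_free (hN i)
  have hQff : ∀ i, Module.Finite R (Q i) ∧ Module.Free R (Q i) :=
    fun i => isCompl_fin_free (hQcompl i)
  -- rank of Q i is 1
  have hQrank : ∀ i, Module.finrank R (Q i) = 1 := by
    intro i
    set S := F i.succ with hS
    set p := (F i.castSucc).comap S.subtype with hp
    set q := (Q i).comap S.subtype with hq
    have hcompl' : IsCompl p q := isCompl_comap (hle i) (hQle i) (hQsup i) (hQinf i)
    have e1 := Submodule.comapSubtypeEquivOfLe (hle i)
    have e2 := Submodule.comapSubtypeEquivOfLe (hQle i)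
    haveI hFc1 := (hFff i.castSucc).1
    haveI hFc2 := (hFff i.castSucc).2
    haveI hQ1 := (hQff i).1
    haveI hQ2 := (hQff i).2
    haveI : Module.Finite R p := Module.Finite.equiv e1.symm
    haveI : Module.Free R p := Module.Free.of_equiv e1.symm
    haveI : Module.Finite R q := Module.Finite.equiv e2.symm
    haveI : Module.Free R q := Module.Free.of_equiv e2.symm
    have eS : (p × q) ≃ₗ[R] S := Submodule.prodEquivOfIsCompl p q hcompl'
    have hfr : Module.finrank R S = Module.finrank R p + Module.finrank R q := by
      rw [← Module.finrank_prod]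
      exact (LinearEquiv.finrank_eq eS).symm
    have h1 : Module.finrank R p = (i : ℕ) := by
      rw [LinearEquiv.finrank_eq e1, hrank i.castSucc, Fin.coe_castSucc]
    have h2 : Module.finrank R S = (i : ℕ) + 1 := by
      rw [hS, hrank i.succ, Fin.val_succ]
    have h3 : Module.finrank R q = Module.finrank R (Q i) := LinearEquiv.finrank_eq e2
    omega
  -- generators
  have hgen : ∀ i, ∃ v : Fin m → R, Q i = Submodule.span R {v} :=
    fun i => span_singleton_of_finrank_one (Q i) (hQff i).1 (hQff i).2 (hQrank i)
  choose v hv using hgen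
  have key : ∀ i : Fin (m + 1),
      Submodule.span R (v '' {j : Fin m | (j : ℕ) < (i : ℕ)}) = F i := by
    intro i
    induction i using Fin.induction with
    | zero =>
      have hempty : {j : Fin m | (j : ℕ) < ((0 : Fin (m+1)) : ℕ)} = ∅ := by
        ext j; simp
      rw [hempty, Set.image_empty, Submodule.span_empty, h0]
    | succ i ih =>
      have hset : {j : Fin m | (j : ℕ) < ((i.succ : Fin (m+1)) : ℕ)} =
          {j : Fin m | (j : ℕ) < ((i.castSucc : Fin (m+1)) : ℕ)} ∪ {i} := by
        ext j
        simp only [Set.mem_setOf_eq, Set.mem_union, Set.mem_singleton_iff,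
          Fin.val_succ, Fin.coe_castSucc, Fin.ext_iff]
        omega
      rw [hset, Set.image_union, Submodule.span_union, ih, Set.image_singleton, ← hv, hQsup]
  -- build the matrix
  have htop' : Submodule.span R (Set.range v) = ⊤ := by
    have hk := key (Fin.last m)
    have huniv : {j : Fin m | (j : ℕ) < ((Fin.last m : Fin (m+1)) : ℕ)} = Set.univ := by
      ext j; simpa using j.isLt
    rw [huniv, Set.image_univ] at hk
    rw [hk, htop]
  set M : Matrix (Fin m) (Fin m) R := Matrix.of fun k j => v j k with hM
  have hsurj : Function.Surjective M.mulVecLin := by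
    rw [← LinearMap.range_eq_top, Matrix.range_mulVecLin]
    have : Set.range M.col = Set.range v := by
      congr 1
    rw [this, htop']
  have hinj : Function.Injective M.mulVecLin :=
    OrzechProperty.injective_of_surjective_endomorphism _ hsurj
  have hUlin : IsUnit ((Matrix.toLinAlgEquiv' : Matrix (Fin m) (Fin m) R ≃ₐ[R] _) M) := by
    have he : (Matrix.toLinAlgEquiv' : Matrix (Fin m) (Fin m) R ≃ₐ[R] _) M = M.mulVecLin := by
      apply LinearMap.ext
      intro w
      rw [Matrix.toLinAlgEquiv'_apply, Matrix.mulVecLin_apply]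
    rw [he, Module.End.isUnit_iff]
    exact ⟨hinj, hsurj⟩
  have hU : IsUnit M := by
    have := hUlin.map (Matrix.toLinAlgEquiv' :
      Matrix (Fin m) (Fin m) R ≃ₐ[R] _).symm.toAlgHom
    simpa using this
  refine ⟨hU.unit, ?_⟩
  funext i
  have hcoe : ((hU.unit : GL (Fin m) R) : Matrix (Fin m) (Fin m) R) = M := hU.unit_spec
  rw [hcoe]
  have hcols : (fun j k => M k j) = v := by
    funext j k
    rfl
  rw [hcols]
  exact key i

end Part3

/-- Over a Bézout domain `R`: every finitely generated projective module
is free, the Picard group (class group) of `R` is trivial, and the natural map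
`GL_m(R)/B(R) → (GL_m/B)(R)` to the set of full flags of direct summands of `Rᵐ` is
bijective (surjective onto flags, with fibers exactly the right `B(R)`-cosets, `B` the
upper triangular Borel). -/
theorem stmt_5 (R : Type) [CommRing R] [IsDomain R] [IsBezout R] (m : ℕ) :
    (∀ (M : Type) [AddCommGroup M] [Module R M],
        Module.Finite R M → Module.Projective R M → Module.Free R M) ∧
    Subsingleton (ClassGroup R) ∧
    ((∀ F : Fin (m + 1) → Submodule R (Fin m → R),
        Monotone F → F 0 = ⊥ → F (Fin.last m) = ⊤ →
        (∀ i, ∃ N, IsCompl (F i) N) →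
        (∀ i : Fin (m + 1), Module.finrank R (F i) = (i : ℕ)) →
        ∃ g : GL (Fin m) R, colSpan R m g = F) ∧
      (∀ g g' : GL (Fin m) R,
        colSpan R m g = colSpan R m g' ↔
          Matrix.BlockTriangular
            ((((g⁻¹ * g' : GL (Fin m) R)) : Matrix (Fin m) (Fin m) R)) id)) := by
  classical
  refine ⟨fun M _ _ hfin hproj => free_of_fg_proj M hfin hproj, classGroup_subsingleton, ?_,
    fun g g' => colSpan_eq_iff g g'⟩
  intro F hmono h0 htop hcompl hrank
  obtain ⟨g, hg⟩ := flag_surj F hmono h0 htop hcompl hrank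
  exact ⟨g, hg⟩
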